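/- In a group G generated by involutions r0, r1, r2 satisfying r_i r_j r_k = r_k r_j r_i for all permutations of (0,1,2), every element of G can be written in the form r0^i * (r0*r1)^m * (r0*r2)^n with i ∈ {0,1} and m, n ∈ ℤ. -/
import Mathlib


theorem stmt3 {G : Type*} [Group G] (r : Fin 3 → G)
    (hgen : Subgroup.closure (Set.range r) = ⊤)
    (hinv : ∀ i, r i * r i = 1)
    (hrel : ∀ i j k : Fin 3, i ≠ j → j ≠ k → i ≠ k →
      r i * r j * r k = r k * r j * r i) :
    ∀ g : G, ∃ (i : ℕ) (m n : ℤ), i ≤ 1 ∧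
      g = r 0 ^ i * (r 0 * r 1) ^ m * (r 0 * r 2) ^ n := by
  set a := r 0 * r 1 with ha
  set b := r 0 * r 2 with hb
  have hselfinv : ∀ i, (r i)⁻¹ = r i := fun i =>
    inv_eq_of_mul_eq_one_right (hinv i)
  -- a and b commute
  have hab : Commute a b := by
    have h := hrel 1 0 2 (by decide) (by decide) (by decide)
    show a * b = b * a
    rw [ha, hb]
    calc r 0 * r 1 * (r 0 * r 2) = r 0 * (r 1 * r 0 * r 2) := by group
      _ = r 0 * (r 2 * r 0 * r 1) := by rw [h]
      _ = r 0 * r 2 * (r 0 * r 1) := by group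
  -- r0 semiconjugates a to a⁻¹ and b to b⁻¹
  have sa : SemiconjBy (r 0) a a⁻¹ := by
    show r 0 * a = a⁻¹ * r 0
    rw [ha, mul_inv_rev, hselfinv, hselfinv, ← mul_assoc, hinv, one_mul,
      mul_assoc, hinv, mul_one]
  have sb : SemiconjBy (r 0) b b⁻¹ := by
    show r 0 * b = b⁻¹ * r 0
    rw [hb, mul_inv_rev, hselfinv, hselfinv, ← mul_assoc, hinv, one_mul,
      mul_assoc, hinv, mul_one]
  have La : ∀ m : ℤ, r 0 * a ^ m = a ^ (-m) * r 0 := by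
    intro m
    have := (sa.zpow_right m)
    rw [SemiconjBy, inv_zpow, ← zpow_neg] at this
    exact this
  have Lb : ∀ n : ℤ, r 0 * b ^ n = b ^ (-n) * r 0 := by
    intro n
    have := (sb.zpow_right n)
    rw [SemiconjBy, inv_zpow, ← zpow_neg] at this
    exact this
  have La' : ∀ m : ℤ, a ^ m * r 0 = r 0 * a ^ (-m) := by
    intro m; rw [La (-m), neg_neg]
  have Lb' : ∀ n : ℤ, b ^ n * r 0 = r 0 * b ^ (-n) := by
    intro n; rw [Lb (-n), neg_neg]
  have key : ∀ m n : ℤ, a ^ m * b ^ n * r 0 = r 0 * (a ^ (-m) * b ^ (-n)) := by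
    intro m n
    rw [mul_assoc, Lb', ← mul_assoc, La', mul_assoc]
  have merge : ∀ m n p q : ℤ,
      (a ^ m * b ^ n) * (a ^ p * b ^ q) = a ^ (m + p) * b ^ (n + q) := by
    intro m n p q
    have hc : b ^ n * a ^ p = a ^ p * b ^ n := (hab.zpow_zpow p n).symm.eq
    calc (a ^ m * b ^ n) * (a ^ p * b ^ q)
        = a ^ m * (b ^ n * a ^ p) * b ^ q := by group
      _ = a ^ m * (a ^ p * b ^ n) * b ^ q := by rw [hc]
      _ = (a ^ m * a ^ p) * (b ^ n * b ^ q) := by group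
      _ = a ^ (m + p) * b ^ (n + q) := by rw [← zpow_add, ← zpow_add]
  -- the normal-form predicate
  have main : ∀ g : G, ∃ m n : ℤ,
      g = a ^ m * b ^ n ∨ g = r 0 * (a ^ m * b ^ n) := by
    intro g
    have hg : g ∈ Subgroup.closure (Set.range r) := by rw [hgen]; trivial
    induction hg using Subgroup.closure_induction with
    | mem x hx =>
      obtain ⟨i, rfl⟩ := hx
      fin_cases i
      · exact ⟨0, 0, Or.inr (by simp)⟩
      · refine ⟨1, 0, Or.inr ?_⟩
        show r 1 = _
        rw [zpow_one, zpow_zero, mul_one, ha, ← mul_assoc, hinv, one_mul]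
      · refine ⟨0, 1, Or.inr ?_⟩
        show r 2 = _
        rw [zpow_one, zpow_zero, one_mul, hb, ← mul_assoc, hinv, one_mul]
    | one => exact ⟨0, 0, Or.inl (by simp)⟩
    | mul x y hx hy ihx ihy =>
      obtain ⟨m, n, hx'⟩ := ihx
      obtain ⟨p, q, hy'⟩ := ihy
      rcases hx' with rfl | rfl <;> rcases hy' with rfl | rfl
      · exact ⟨m + p, n + q, Or.inl (merge m n p q)⟩
      · refine ⟨-m + p, -n + q, Or.inr ?_⟩
        rw [← mul_assoc, key, mul_assoc, merge]
      · refine ⟨m + p, n + q, Or.inr ?_⟩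
        rw [mul_assoc, merge]
      · refine ⟨-m + p, -n + q, Or.inl ?_⟩
        calc r 0 * (a ^ m * b ^ n) * (r 0 * (a ^ p * b ^ q))
            = r 0 * (a ^ m * b ^ n * r 0) * (a ^ p * b ^ q) := by group
          _ = r 0 * (r 0 * (a ^ (-m) * b ^ (-n))) * (a ^ p * b ^ q) := by
              rw [key]
          _ = (r 0 * r 0) * ((a ^ (-m) * b ^ (-n)) * (a ^ p * b ^ q)) := by
              group
          _ = a ^ (-m + p) * b ^ (-n + q) := by
              rw [hinv, one_mul, merge]
    | inv x hx ihx =>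
      obtain ⟨m, n, hx'⟩ := ihx
      rcases hx' with rfl | rfl
      · refine ⟨-m, -n, Or.inl ?_⟩
        rw [mul_inv_rev, ← zpow_neg, ← zpow_neg]
        exact (hab.zpow_zpow (-m) (-n)).symm.eq
      · refine ⟨m, n, Or.inr ?_⟩
        rw [mul_inv_rev, mul_inv_rev, hselfinv, ← zpow_neg, ← zpow_neg,
          ← mul_assoc, (hab.symm.zpow_zpow (-n) (-m)).eq, key, neg_neg, neg_neg, mul_assoc]
  intro g
  obtain ⟨m, n, h | h⟩ := main g
  · exact ⟨0, m, n, by norm_num, by rw [h, pow_zero, one_mul]⟩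
  · exact ⟨1, m, n, le_refl 1, by rw [h, pow_one, mul_assoc]⟩
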